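/- arXiv:2501.03657 — 3 statements merged into one kernel-verified Lean document; each statement's English description precedes it below -/
import Mathlib

section
/- Every n×n matrix S with nonnegative real entries has a real eigenvalue equal to its spectral radius ρ(S). -/
open Matrix

section Aux

open Filter Topology Finset

attribute [local instance]
  Matrix.linftyOpNormedRing Matrix.linftyOpNormedAlgebra

noncomputable section

instance matrixCompleteAux {n : ℕ} : CompleteSpace (Matrix (Fin n) (Fin n) ℂ) :=
  (inferInstance : CompleteSpace (Fin n → Fin n → ℂ))

/-- entry norm is bounded by the matrix (linfty-op) norm -/
lemma entry_norm_le_aux {n : ℕ} (M : Matrix (Fin n) (Fin n) ℂ) (i j : Fin n) :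
    ‖M i j‖ ≤ ‖M‖ := by
  have h : ‖M i j‖₊ ≤ ‖M‖₊ := by
    rw [Matrix.linfty_opNNNorm_def]
    refine le_trans ?_ (Finset.le_sup (Finset.mem_univ i))
    exact Finset.single_le_sum (f := fun j' => ‖M i j'‖₊) (fun _ _ => zero_le)
      (Finset.mem_univ j)
  exact_mod_cast h

/-- matrix norm is bounded by sum of entry norms -/
lemma norm_le_sum_sum_aux {n : ℕ} (M : Matrix (Fin n) (Fin n) ℂ) :
    ‖M‖ ≤ ∑ i, ∑ j, ‖M i j‖ := by
  have h : ‖M‖₊ ≤ ∑ i, ∑ j, ‖M i j‖₊ := by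
    rw [Matrix.linfty_opNNNorm_def]
    refine Finset.sup_le fun i _ => ?_
    exact Finset.single_le_sum (f := fun i' => ∑ j, ‖M i' j‖₊) (fun _ _ => zero_le)
      (Finset.mem_univ i)
  calc ‖M‖ = ((‖M‖₊ : ℝ)) := rfl
  _ ≤ ((∑ i, ∑ j, ‖M i j‖₊ : NNReal) : ℝ) := by exact_mod_cast h
  _ = ∑ i, ∑ j, ‖M i j‖ := by push_cast; rfl

/-- geometric series gives a unit -/
lemma isUnit_one_sub_of_summable {R : Type*} [NormedRing R] [CompleteSpace R] {a : R}
    (h : Summable fun k : ℕ => a ^ k) : IsUnit (1 - a) := by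
  set M := ∑' k : ℕ, a ^ k with hMdef
  have hM : HasSum (fun k : ℕ => a ^ k) M := h.hasSum
  have h0 : Tendsto (fun k : ℕ => a ^ k) atTop (𝓝 0) := h.tendsto_atTop_zero
  have hsub : Summable fun k : ℕ => a ^ k - a ^ (k + 1) :=
    h.sub ((summable_nat_add_iff 1).mpr h)
  have h1 : HasSum (fun k : ℕ => a ^ k - a ^ (k + 1)) 1 := by
    rw [hsub.hasSum_iff_tendsto_nat]
    have heq : ∀ N : ℕ, ∑ k ∈ Finset.range N, (a ^ k - a ^ (k + 1)) = 1 - a ^ N := by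
      intro N
      rw [Finset.sum_range_sub' (fun k => a ^ k)]
      simp
    simp only [heq]
    simpa using tendsto_const_nhds.sub h0
  have hl : (1 - a) * M = 1 := by
    have h2 := hM.mul_left (1 - a)
    have h3 : HasSum (fun k : ℕ => a ^ k - a ^ (k + 1)) ((1 - a) * M) := by
      convert h2 using 2 with k
      · rfl
      rw [sub_mul, one_mul, pow_succ']
    exact h3.unique h1
  have hr : M * (1 - a) = 1 := by
    have h2 := hM.mul_right (1 - a)
    have h3 : HasSum (fun k : ℕ => a ^ k - a ^ (k + 1)) (M * (1 - a)) := by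
      convert h2 using 2 with k
      · rfl
      rw [mul_sub, mul_one, pow_succ]
    exact h3.unique h1
  exact ⟨⟨1 - a, M, hl, hr⟩, rfl⟩

/-- Neumann/resolvent series inside the inverse spectral radius -/
lemma hasSum_inv_one_sub_smul_aux {A : Type*} [NormedRing A] [NormedAlgebra ℂ A]
    [CompleteSpace A] (a : A) {z : ℂ} (hz : (‖z‖₊ : ENNReal) < (spectralRadius ℂ a)⁻¹) :
    HasSum (fun k : ℕ => z ^ k • a ^ k) (Ring.inverse (1 - z • a)) := by
  obtain ⟨r, hr1, hr2⟩ := ENNReal.lt_iff_exists_nnreal_btwn.mp hz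
  have r_pos : (0 : NNReal) < r := ENNReal.coe_pos.mp (zero_le.trans_lt hr1)
  have H₁ := (spectrum.differentiableOn_inverse_one_sub_smul hr2).hasFPowerSeriesOnBall r_pos
  have H₂ := (spectrum.hasFPowerSeriesOnBall_inverse_one_sub_smul ℂ a).exchange_radius H₁
  have hz' : z ∈ Metric.eball (0 : ℂ) r := by
    rw [Metric.mem_eball, edist_zero_right]
    exact_mod_cast hr1
  have h3 := H₂.hasSum hz'
  simp only [ContinuousMultilinearMap.mkPiRing_apply, Finset.prod_const, Finset.card_univ,
    Fintype.card_fin, zero_add] at h3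
  exact h3

/-- entries of powers of a nonnegative matrix are nonnegative -/
lemma pow_entry_nonneg_aux {n : ℕ} {S : Matrix (Fin n) (Fin n) ℝ}
    (hS : ∀ i j, 0 ≤ S i j) : ∀ (k : ℕ) (i j : Fin n), 0 ≤ (S ^ k) i j := by
  intro k
  induction k with
  | zero =>
    intro i j
    rcases eq_or_ne i j with h | h <;> simp [pow_zero, Matrix.one_apply, h]
  | succ k ih =>
    intro i j
    rw [pow_succ, Matrix.mul_apply]
    exact Finset.sum_nonneg fun l _ => mul_nonneg (ih i l) (hS l j)

/-- Every `n × n` real matrix with nonnegative entries has a real eigenvalue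
equal to its spectral radius: there is a nonnegative real `r` in the (complex)
spectrum of `S` such that every element of the spectrum has norm at most `r`. -/
theorem exists_nonneg_real_eigenvalue_eq_spectralRadius
    {n : ℕ} (S : Matrix (Fin n) (Fin n) ℝ)
    (hS : ∀ i j, 0 ≤ S i j) :
    0 < n → ∃ r : ℝ, 0 ≤ r ∧ (r : ℂ) ∈ spectrum ℂ (S.map (Complex.ofReal)) ∧
      ∀ μ ∈ spectrum ℂ (S.map (Complex.ofReal)), ‖μ‖ ≤ r := by
  intro hn
  haveI : Nonempty (Fin n) := ⟨⟨0, hn⟩⟩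
  set A : Matrix (Fin n) (Fin n) ℂ := S.map Complex.ofReal with hAdef
  haveI : Nontrivial (Matrix (Fin n) (Fin n) ℂ) := by
    refine ⟨0, 1, fun h => ?_⟩
    have := congrFun (congrFun h ⟨0, hn⟩) ⟨0, hn⟩
    simp [Matrix.one_apply] at this
  obtain ⟨μ₀, hμ₀, hμ₀r⟩ := spectrum.exists_nnnorm_eq_spectralRadius A
  refine ⟨‖μ₀‖, norm_nonneg _, ?_, ?_⟩
  swap
  · intro μ hμ
    have h1 : (‖μ‖₊ : ENNReal) ≤ spectralRadius ℂ A := by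
      rw [spectralRadius]
      exact le_iSup₂ (f := fun k (_ : k ∈ spectrum ℂ A) => (‖k‖₊ : ENNReal)) μ hμ
    rw [← hμ₀r] at h1
    exact_mod_cast h1
  by_contra hmem
  rcases eq_or_lt_of_le (norm_nonneg μ₀) with h0 | hpos
  · apply hmem
    have hz : μ₀ = 0 := by rwa [eq_comm, norm_eq_zero] at h0
    rw [← h0]
    simpa [hz] using hμ₀
  -- now 0 < r := ‖μ₀‖
  set r : ℝ := ‖μ₀‖ with hrdef
  have hrne : r ≠ 0 := ne_of_gt hpos
  have hμ0ne : μ₀ ≠ 0 := fun h => hrne (by simp [hrdef, h])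
  have hrC : (r : ℂ) ≠ 0 := by exact_mod_cast hrne
  have hApow : ∀ k : ℕ, A ^ k = (S ^ k).map Complex.ofReal := by
    intro k
    have := map_pow (Complex.ofRealHom.mapMatrix (m := Fin n)) S k
    exact this.symm
  -- Neumann series for real t > r
  have key : ∀ t : ℝ, r < t →
      HasSum (fun k : ℕ => ((t : ℂ))⁻¹ ^ k • A ^ k)
        (Ring.inverse (1 - ((t : ℂ))⁻¹ • A)) := by
    intro t ht
    apply hasSum_inv_one_sub_smul_aux
    rw [← hμ₀r, ← ENNReal.coe_inv (nnnorm_ne_zero_iff.mpr hμ0ne), ENNReal.coe_lt_coe,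
      ← NNReal.coe_lt_coe]
    have h1 : ‖((t : ℂ))⁻¹‖ = t⁻¹ := by
      rw [norm_inv, Complex.norm_real, Real.norm_eq_abs, abs_of_pos (hpos.trans ht)]
    have h2 : ((‖μ₀‖₊⁻¹ : NNReal) : ℝ) = r⁻¹ := by
      simp [hrdef]
    rw [coe_nnnorm, h1, h2]
    exact inv_strictAnti₀ hpos ht
  -- the matrix 1 - r⁻¹ • A is a unit (since r ∉ spectrum)
  have hunit : IsUnit (1 - ((r : ℂ))⁻¹ • A) := by
    have h1 : IsUnit (algebraMap ℂ (Matrix (Fin n) (Fin n) ℂ) (r : ℂ) - A) :=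
      spectrum.notMem_iff.mp hmem
    have h2 : IsUnit (algebraMap ℂ (Matrix (Fin n) (Fin n) ℂ) ((r : ℂ))⁻¹) :=
      (isUnit_iff_ne_zero.mpr (inv_ne_zero hrC)).map (algebraMap ℂ _)
    have h3 := h2.mul h1
    have heq : algebraMap ℂ (Matrix (Fin n) (Fin n) ℂ) ((r : ℂ))⁻¹ *
        (algebraMap ℂ (Matrix (Fin n) (Fin n) ℂ) (r : ℂ) - A) = 1 - ((r : ℂ))⁻¹ • A := by
      rw [mul_sub, ← _root_.map_mul, inv_mul_cancel₀ hrC, _root_.map_one, ← Algebra.smul_def]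
    rwa [heq] at h3
  -- continuity of resolvent at r, giving a bound C
  set g : ℝ → Matrix (Fin n) (Fin n) ℂ :=
    fun t => Ring.inverse (1 - ((t : ℂ))⁻¹ • A) with hgdef
  have hcont : ContinuousAt g r := by
    have h1 : ContinuousAt (fun t : ℝ => 1 - ((t : ℂ))⁻¹ • A) r := by
      refine continuousAt_const.sub ?_
      exact ((Complex.continuous_ofReal.continuousAt).inv₀ hrC).smul continuousAt_const
    have h2 : ContinuousAt Ring.inverse ((1 : Matrix (Fin n) (Fin n) ℂ) - ((r : ℂ))⁻¹ • A) := by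
      have := NormedRing.inverse_continuousAt hunit.unit
      rwa [IsUnit.unit_spec] at this
    exact ContinuousAt.comp (g := Ring.inverse)
      (f := fun t : ℝ => 1 - ((t : ℂ))⁻¹ • A) h2 h1
  set C : ℝ := ‖g r‖ + 1 with hCdef
  have hbound : ∀ᶠ t in 𝓝[>] r, ‖g t‖ ≤ C := by
    have h1 : Tendsto (fun t => ‖g t‖) (𝓝 r) (𝓝 ‖g r‖) := hcont.norm
    exact (h1.eventually (eventually_le_nhds (lt_add_one _))).filter_mono
      nhdsWithin_le_nhds
  -- summability of entries at r
  have hsum_r : ∀ i j : Fin n, Summable (fun k : ℕ => r⁻¹ ^ k * (S ^ k) i j) := by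
    intro i j
    refine summable_of_sum_range_le
      (fun k => mul_nonneg (pow_nonneg (inv_nonneg.mpr hpos.le) k)
        (pow_entry_nonneg_aux hS k i j)) (c := C) ?_
    intro N
    have hlim : Tendsto (fun t : ℝ => ∑ k ∈ Finset.range N, t⁻¹ ^ k * (S ^ k) i j)
        (𝓝[>] r) (𝓝 (∑ k ∈ Finset.range N, r⁻¹ ^ k * (S ^ k) i j)) := by
      refine Tendsto.mono_left ?_ nhdsWithin_le_nhds
      refine tendsto_finset_sum _ fun k _ => ?_
      exact (((continuousAt_id.inv₀ hrne).pow k).mul continuousAt_const)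
    refine le_of_tendsto hlim ?_
    filter_upwards [hbound, self_mem_nhdsWithin] with t hC ht
    have htpos : (0 : ℝ) < t := hpos.trans ht
    have hts := key t ht
    -- extract entry (i,j), then real part
    have hentry0 : HasSum (fun k : ℕ => (((t : ℂ))⁻¹ ^ k • A ^ k) i j) (g t i j) := by
      have hc : Continuous (fun M : Matrix (Fin n) (Fin n) ℂ => M i j) := by
        apply AddMonoidHomClass.continuous_of_bound
          (AddMonoidHom.mk' (fun M : Matrix (Fin n) (Fin n) ℂ => M i j) fun _ _ => rfl) 1
        intro M
        rw [one_mul]; exact entry_norm_le_aux M i j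
      exact hts.map (AddMonoidHom.mk' (fun M : Matrix (Fin n) (Fin n) ℂ => M i j)
        fun _ _ => rfl) hc
    have hentry : HasSum (fun k : ℕ => t⁻¹ ^ k * (S ^ k) i j) ((g t i j).re) := by
      have h2 := hentry0.mapL Complex.reCLM
      convert h2 using 2 with k
      simp only [Function.comp_apply, Matrix.smul_apply, smul_eq_mul, hApow,
        Matrix.map_apply]
      rw [show ((t : ℂ))⁻¹ = ((t⁻¹ : ℝ) : ℂ) by push_cast; ring]
      rw [← Complex.ofReal_pow, ← Complex.ofReal_mul, Complex.reCLM_apply,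
        Complex.ofReal_re]
      rfl
    calc ∑ k ∈ Finset.range N, t⁻¹ ^ k * (S ^ k) i j
        ≤ (g t i j).re := by
          refine sum_le_hasSum _ (fun k _ => mul_nonneg
            (pow_nonneg (inv_nonneg.mpr htpos.le) k) (pow_entry_nonneg_aux hS k i j)) hentry
      _ ≤ ‖g t i j‖ := by
          refine le_trans (le_abs_self _) ?_
          exact Complex.abs_re_le_norm _
      _ ≤ ‖g t‖ := entry_norm_le_aux _ i j
      _ ≤ C := hC
  -- absolute summability of the series at μ₀
  have hsummat : Summable (fun k : ℕ => (μ₀⁻¹ • A) ^ k) := by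
    refine Summable.of_norm_bounded (g := fun k => ∑ i, ∑ j, r⁻¹ ^ k * (S ^ k) i j) ?_ ?_
    · exact summable_sum fun i _ => summable_sum fun j _ => hsum_r i j
    · intro k
      rw [smul_pow, norm_smul]
      have h1 : ‖μ₀⁻¹ ^ k‖ = r⁻¹ ^ k := by
        rw [norm_pow, norm_inv, hrdef]
      rw [h1]
      calc r⁻¹ ^ k * ‖A ^ k‖ ≤ r⁻¹ ^ k * ∑ i, ∑ j, ‖(A ^ k) i j‖ := by
            refine mul_le_mul_of_nonneg_left (norm_le_sum_sum_aux _)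
              (pow_nonneg (inv_nonneg.mpr hpos.le) k)
        _ = ∑ i, ∑ j, r⁻¹ ^ k * (S ^ k) i j := by
            rw [Finset.mul_sum]
            refine Finset.sum_congr rfl fun i _ => ?_
            rw [Finset.mul_sum]
            refine Finset.sum_congr rfl fun j _ => ?_
            congr 1
            rw [hApow, Matrix.map_apply, Complex.norm_real, Real.norm_eq_abs,
              abs_of_nonneg (pow_entry_nonneg_aux hS k i j)]
  have hunit2 : IsUnit (1 - μ₀⁻¹ • A) := isUnit_one_sub_of_summable hsummat
  -- contradiction with μ₀ ∈ spectrum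
  have h2 : IsUnit (algebraMap ℂ (Matrix (Fin n) (Fin n) ℂ) μ₀) :=
    (isUnit_iff_ne_zero.mpr hμ0ne).map (algebraMap ℂ _)
  have h3 := h2.mul hunit2
  have heq : algebraMap ℂ (Matrix (Fin n) (Fin n) ℂ) μ₀ * (1 - μ₀⁻¹ • A) =
      algebraMap ℂ (Matrix (Fin n) (Fin n) ℂ) μ₀ - A := by
    rw [mul_sub, mul_one, Algebra.smul_def, ← mul_assoc, ← _root_.map_mul,
      mul_inv_cancel₀ hμ0ne, _root_.map_one, one_mul]
  rw [heq] at h3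
  exact (spectrum.notMem_iff.mpr h3) hμ₀

end

end Aux
end

section
/- Let X be an n×n random matrix with independent centered entries with E|X_{ij}|^2 = s_{ij}. Then for the reverse characteristic polynomial q(z) = det(I - zX), one has E|q(z)|^2 = perm(I + |z|^2 S), where S = [s_{ij}]. -/
open Matrix MeasureTheory ProbabilityTheory

/-- The permanent of a square matrix. -/
def Matrix.perm {m : Type*} [DecidableEq m] [Fintype m] {R : Type*} [CommRing R]
    (M : Matrix m m R) : R :=
  ∑ σ : Equiv.Perm m, ∏ i, M i (σ i)

section AuxLemmas

open Finset


variable {Ω : Type*} [MeasurableSpace Ω] {μ : Measure Ω}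

/-- iIndepFun is stable under a.e. modification. -/
lemma iIndepFun_of_ae_eq {ι : Type*} {β : ι → Type*} (m : ∀ i, MeasurableSpace (β i))
    {f g : ∀ i, Ω → β i} (h : ∀ i, f i =ᵐ[μ] g i)
    (hf : iIndepFun (m := m) f μ) : iIndepFun (m := m) g μ := by
  rw [iIndepFun_iff_measure_inter_preimage_eq_mul] at hf ⊢
  intro S sets hsets
  have hpre : ∀ i : ι, (f i ⁻¹' sets i : Set Ω) =ᵐ[μ] g i ⁻¹' sets i := by
    intro i
    filter_upwards [h i] with ω hω
    show (f i ω ∈ sets i) = (g i ω ∈ sets i)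
    rw [hω]
  have h1 : μ (⋂ i ∈ S, g i ⁻¹' sets i) = μ (⋂ i ∈ S, f i ⁻¹' sets i) := by
    refine measure_congr (EventuallyEq.countable_bInter S.countable_toSet
      fun i _ => (hpre i).symm)
  rw [h1, hf S hsets]
  exact Finset.prod_congr rfl fun i _ => measure_congr (hpre i)


/-- Product formula for the integral of two independent complex random variables. -/
lemma indepFun_integral_mul_complex [IsProbabilityMeasure μ] {X Y : Ω → ℂ}
    (h : IndepFun X Y μ) (hX : Measurable X) (hY : Measurable Y) :
    ∫ ω, X ω * Y ω ∂μ = (∫ ω, X ω ∂μ) * ∫ ω, Y ω ∂μ := by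
  have hmap : μ.map (fun ω => (X ω, Y ω)) = (μ.map X).prod (μ.map Y) :=
    (indepFun_iff_map_prod_eq_prod_map_map hX.aemeasurable hY.aemeasurable).1 h
  have hpair : AEMeasurable (fun ω => (X ω, Y ω)) μ := (hX.prodMk hY).aemeasurable
  haveI : IsProbabilityMeasure (μ.map X) := Measure.isProbabilityMeasure_map hX.aemeasurable
  haveI : IsProbabilityMeasure (μ.map Y) := Measure.isProbabilityMeasure_map hY.aemeasurable
  have h1 : ∫ ω, X ω * Y ω ∂μ = ∫ p : ℂ × ℂ, p.1 * p.2 ∂(μ.map (fun ω => (X ω, Y ω))) :=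
    (integral_map hpair ((measurable_fst.mul measurable_snd).aestronglyMeasurable)).symm
  rw [h1, hmap, integral_prod_mul (fun x : ℂ => x) (fun y : ℂ => y),
    integral_map (f := fun x : ℂ => x) hX.aemeasurable measurable_id.aestronglyMeasurable,
    integral_map (f := fun x : ℂ => x) hY.aemeasurable measurable_id.aestronglyMeasurable]

/-- Expectation of a finite product of independent integrable complex random variables. -/
lemma indep_integral_prod [IsProbabilityMeasure μ] {ι : Type*} {f : ι → Ω → ℂ}
    (hind : iIndepFun f μ)
    (hmeas : ∀ i, Measurable (f i)) (hint : ∀ i, Integrable (f i) μ)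
    (t : Finset ι) :
    Integrable (fun ω => ∏ i ∈ t, f i ω) μ ∧
      ∫ ω, ∏ i ∈ t, f i ω ∂μ = ∏ i ∈ t, ∫ ω, f i ω ∂μ := by
  classical
  induction t using Finset.induction with
  | empty => simp
  | @insert j u hj ih =>
    have hdep : IndepFun (∏ k ∈ u, f k) (f j) μ :=
      hind.indepFun_finsetProd_of_notMem hmeas hj
    have hprod : (fun ω => ∏ k ∈ u, f k ω) = ∏ k ∈ u, f k := by
      ext ω; simp [Finset.prod_apply]
    have hiu : Integrable (∏ k ∈ u, f k) μ := by rw [← hprod]; exact ih.1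
    have hintmul : Integrable ((∏ k ∈ u, f k) * f j) μ := hdep.integrable_mul hiu (hint j)
    constructor
    · have : (fun ω => ∏ i ∈ insert j u, f i ω) = (∏ k ∈ u, f k) * f j := by
        ext ω; simp [Finset.prod_insert hj, Finset.prod_apply, mul_comm]
      rw [this]; exact hintmul
    · have h2 : ∫ ω, (∏ k ∈ u, f k) ω * f j ω ∂μ
          = (∫ ω, (∏ k ∈ u, f k) ω ∂μ) * ∫ ω, f j ω ∂μ :=
        indepFun_integral_mul_complex hdep (by measurability) (hmeas j)
      have : (fun ω => ∏ i ∈ insert j u, f i ω) = fun ω => (∏ k ∈ u, f k) ω * f j ω := by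
        ext ω; simp [Finset.prod_insert hj, Finset.prod_apply, mul_comm]
      rw [Finset.prod_insert hj, this]
      calc ∫ ω, (∏ k ∈ u, f k) ω * f j ω ∂μ
          = (∫ ω, (∏ k ∈ u, f k) ω ∂μ) * ∫ ω, f j ω ∂μ := h2
        _ = (∫ ω, f j ω ∂μ) * ∏ i ∈ u, ∫ ω, f i ω ∂μ := by
            rw [mul_comm]; congr 1
            rw [← ih.2]; exact integral_congr_ae (by filter_upwards with ω; simp [Finset.prod_apply])

end AuxLemmas

/-- Let `X` be an `n × n` random matrix with independent centered entries with
`E|X_ij|² = s_ij`. Then for the reverse characteristic polynomial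
`q(z) = det (I - z X)` one has `E|q(z)|² = perm (I + |z|² S)`. -/
theorem integral_sq_norm_rev_charpoly_eq_perm
    {Ω : Type*} [MeasurableSpace Ω] (μ : Measure Ω) [IsProbabilityMeasure μ]
    {n : ℕ} (X : Ω → Matrix (Fin n) (Fin n) ℂ) (s : Matrix (Fin n) (Fin n) ℝ)
    (hindep : iIndepFun
      (fun p : Fin n × Fin n => fun ω => X ω p.1 p.2) μ)
    (hL2 : ∀ i j, MemLp (fun ω => X ω i j) 2 μ)
    (hcen : ∀ i j, ∫ ω, X ω i j ∂μ = 0)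
    (hvar : ∀ i j, ∫ ω, ‖X ω i j‖ ^ 2 ∂μ = s i j)
    (z : ℂ) :
    ∫ ω, ‖(1 - z • X ω).det‖ ^ 2 ∂μ = ((1 : Matrix (Fin n) (Fin n) ℝ) + ‖z‖ ^ 2 • s).perm := by
  classical
  -- measurable versions of the entries
  have hAE : ∀ p : Fin n × Fin n, AEMeasurable (fun ω => X ω p.1 p.2) μ := fun p =>
    (hL2 p.1 p.2).aestronglyMeasurable.aemeasurable
  obtain ⟨Y, hYmeas, hYae⟩ : ∃ Y : Fin n × Fin n → Ω → ℂ,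
      (∀ p, Measurable (Y p)) ∧ ∀ p, (fun ω => X ω p.1 p.2) =ᵐ[μ] Y p :=
    ⟨fun p => (hAE p).mk _, fun p => (hAE p).measurable_mk, fun p => (hAE p).ae_eq_mk⟩
  have hYindep : iIndepFun Y μ :=
    iIndepFun_of_ae_eq _ hYae hindep
  have hYL2 : ∀ p, MemLp (Y p) 2 μ := fun p => (hL2 p.1 p.2).ae_eq (hYae p)
  have hYcen : ∀ p, ∫ ω, Y p ω ∂μ = 0 := fun p => by
    rw [← integral_congr_ae (hYae p)]; exact hcen p.1 p.2
  have hYvar : ∀ p, ∫ ω, ‖Y p ω‖ ^ 2 ∂μ = s p.1 p.2 := fun p => by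
    have h1 : (fun ω => ‖X ω p.1 p.2‖ ^ 2) =ᵐ[μ] (fun ω => ‖Y p ω‖ ^ 2) := by
      filter_upwards [hYae p] with ω hω; rw [hω]
    rw [← integral_congr_ae h1]; exact hvar p.1 p.2
  -- notation
  set a : Fin n × Fin n → ℂ := fun p => if p.1 = p.2 then 1 else 0 with ha
  set D : Ω → Matrix (Fin n) (Fin n) ℂ :=
    fun ω => Matrix.of (fun r c => a (r, c) - z * Y (r, c) ω) with hD
  set Bm : Matrix (Fin n) (Fin n) ℝ := 1 + ‖z‖ ^ 2 • s with hBm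
  -- replace X by Y
  have hXD : ∫ ω, ‖(1 - z • X ω).det‖ ^ 2 ∂μ = ∫ ω, ‖(D ω).det‖ ^ 2 ∂μ := by
    refine integral_congr_ae ?_
    have hall : ∀ᵐ ω ∂μ, ∀ p : Fin n × Fin n, X ω p.1 p.2 = Y p ω :=
      ae_all_iff.mpr fun p => hYae p
    filter_upwards [hall] with ω hω
    have : (1 - z • X ω) = D ω := by
      ext r c
      simp only [hD, ha, Matrix.sub_apply, Matrix.smul_apply, Matrix.one_apply, Matrix.of_apply,
        smul_eq_mul]
      rw [hω (r, c)]
    rw [this]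
  rw [hXD]
  -- the per-entry functions
  set g : Equiv.Perm (Fin n) → Equiv.Perm (Fin n) → (Fin n × Fin n) → ℂ → ℂ :=
    fun σ τ p x => (if p.1 = σ p.2 then a p - z * x else 1) *
      (if p.1 = τ p.2 then (starRingEnd ℂ) (a p - z * x) else 1) with hg
  have hgmeas : ∀ σ τ p, Measurable (g σ τ p) := by
    intro σ τ p
    apply Measurable.mul <;> split_ifs
    · exact measurable_const.sub (measurable_const.mul measurable_id)
    · exact measurable_const
    · exact continuous_star.measurable.comp (measurable_const.sub (measurable_const.mul measurable_id))
    · exact measurable_const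
  set F : Equiv.Perm (Fin n) → Equiv.Perm (Fin n) → (Fin n × Fin n) → Ω → ℂ :=
    fun σ τ p ω => g σ τ p (Y p ω) with hF
  have hFindep : ∀ σ τ, iIndepFun (F σ τ) μ :=
    fun σ τ => hYindep.comp _ (hgmeas σ τ)
  have hFmeas : ∀ σ τ p, Measurable (F σ τ p) := fun σ τ p => (hgmeas σ τ p).comp (hYmeas p)
  -- MemLp facts
  have hlin2 : ∀ p, MemLp (fun ω => a p - z * Y p ω) 2 μ := fun p =>
    (memLp_const (a p)).sub ((hYL2 p).const_mul z)
  have hlin2c : ∀ p, MemLp (fun ω => (starRingEnd ℂ) (a p - z * Y p ω)) 2 μ := fun p =>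
    MemLp.congr_norm (hlin2 p)
      (continuous_star.comp_aestronglyMeasurable (hlin2 p).1)
      (Filter.Eventually.of_forall fun ω => (RCLike.norm_conj _).symm)
  have hYL2c : ∀ p, MemLp (fun ω => (starRingEnd ℂ) (Y p ω)) 2 μ := fun p =>
    MemLp.congr_norm (hYL2 p)
      (continuous_star.comp_aestronglyMeasurable (hYL2 p).1)
      (Filter.Eventually.of_forall fun ω => (RCLike.norm_conj _).symm)
  -- integrability of the per-entry functions
  have hint1 : ∀ p, Integrable (fun ω => a p - z * Y p ω) μ := fun p =>
    (hlin2 p).integrable one_le_two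
  have hint1c : ∀ p, Integrable (fun ω => (starRingEnd ℂ) (a p - z * Y p ω)) μ := fun p =>
    (hlin2c p).integrable one_le_two
  have hint2 : ∀ p, Integrable
      (fun ω => (a p - z * Y p ω) * (starRingEnd ℂ) (a p - z * Y p ω)) μ := fun p =>
    memLp_one_iff_integrable.mp ((hlin2c p).smul (hlin2 p))
  have hFint : ∀ σ τ p, Integrable (F σ τ p) μ := by
    intro σ τ p
    simp only [hF, hg]
    by_cases h1 : p.1 = σ p.2 <;> by_cases h2 : p.1 = τ p.2
    · simp only [if_pos h1, if_pos h2]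
      exact hint2 p
    · simp only [if_pos h1, if_neg h2, mul_one]
      exact hint1 p
    · simp only [if_neg h1, if_pos h2, one_mul]
      exact hint1c p
    · simp only [if_neg h1, if_neg h2, one_mul]
      exact integrable_const 1
  -- values of the integrals of the factors
  have hint_lin : ∀ p, ∫ ω, (a p - z * Y p ω) ∂μ = a p := by
    intro p
    rw [integral_sub (integrable_const _) (((hYL2 p).integrable one_le_two).const_mul z),
      integral_const_mul, hYcen p, integral_const]
    simp
  have hconj_a : ∀ p, (starRingEnd ℂ) (a p) = a p := by
    intro p
    simp only [ha]
    split_ifs <;> simp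
  have hint_linc : ∀ p, ∫ ω, (starRingEnd ℂ) (a p - z * Y p ω) ∂μ = a p := by
    intro p
    rw [integral_conj, hint_lin p, hconj_a p]
  have hnormsq : ∀ w : ℂ, w * (starRingEnd ℂ) w = ((‖w‖ ^ 2 : ℝ) : ℂ) := by
    intro w
    rw [Complex.mul_conj]
    norm_cast
    rw [Complex.normSq_eq_norm_sq]
  have hYvar' : ∀ p, ∫ ω, Y p ω * (starRingEnd ℂ) (Y p ω) ∂μ = ((s p.1 p.2 : ℝ) : ℂ) := by
    intro p
    calc ∫ ω, Y p ω * (starRingEnd ℂ) (Y p ω) ∂μ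
        = ∫ ω, ((‖Y p ω‖ ^ 2 : ℝ) : ℂ) ∂μ :=
          integral_congr_ae (Filter.Eventually.of_forall fun ω => hnormsq _)
      _ = ((s p.1 p.2 : ℝ) : ℂ) := by rw [← hYvar p]; exact integral_ofReal
  have hint_quad : ∀ p, ∫ ω, (a p - z * Y p ω) * (starRingEnd ℂ) (a p - z * Y p ω) ∂μ
      = a p + ((‖z‖ ^ 2 * s p.1 p.2 : ℝ) : ℂ) := by
    intro p
    have hexp : ∀ ω, (a p - z * Y p ω) * (starRingEnd ℂ) (a p - z * Y p ω)
        = (a p * (starRingEnd ℂ) (a p)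
            - (a p * (starRingEnd ℂ) z) * (starRingEnd ℂ) (Y p ω))
          - ((starRingEnd ℂ) (a p) * z) * Y p ω
          + (z * (starRingEnd ℂ) z) * (Y p ω * (starRingEnd ℂ) (Y p ω)) := by
      intro ω; simp only [map_sub, _root_.map_mul]; ring
    have hYint : Integrable (Y p) μ := (hYL2 p).integrable one_le_two
    have hYintc : Integrable (fun ω => (starRingEnd ℂ) (Y p ω)) μ :=
      (hYL2c p).integrable one_le_two
    have hYq : Integrable (fun ω => Y p ω * (starRingEnd ℂ) (Y p ω)) μ :=
      memLp_one_iff_integrable.mp ((hYL2c p).smul (hYL2 p))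
    have hI1 : Integrable (fun ω => a p * (starRingEnd ℂ) (a p)
        - a p * (starRingEnd ℂ) z * (starRingEnd ℂ) (Y p ω)) μ :=
      (integrable_const _).sub (hYintc.const_mul _)
    have hI2 : Integrable (fun ω => (a p * (starRingEnd ℂ) (a p)
        - a p * (starRingEnd ℂ) z * (starRingEnd ℂ) (Y p ω))
        - (starRingEnd ℂ) (a p) * z * Y p ω) μ := hI1.sub (hYint.const_mul _)
    have e2 : ∫ ω, a p * (starRingEnd ℂ) z * (starRingEnd ℂ) (Y p ω) ∂μ = 0 := by
      rw [integral_const_mul, integral_conj, hYcen p]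
      simp
    have e3 : ∫ ω, (starRingEnd ℂ) (a p) * z * Y p ω ∂μ = 0 := by
      rw [integral_const_mul, hYcen p, mul_zero]
    have e4 : ∫ ω, z * (starRingEnd ℂ) z * (Y p ω * (starRingEnd ℂ) (Y p ω)) ∂μ
        = z * (starRingEnd ℂ) z * ((s p.1 p.2 : ℝ) : ℂ) := by
      rw [integral_const_mul, hYvar' p]
    rw [integral_congr_ae (Filter.Eventually.of_forall hexp)]
    rw [integral_add hI2 (hYq.const_mul _),
      integral_sub hI1 (hYint.const_mul _),
      integral_sub (integrable_const _) (hYintc.const_mul _),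
      e2, e3, e4, integral_const]
    simp only [sub_zero, measure_univ, ENNReal.toReal_one, probReal_univ, one_smul]
    rw [hnormsq z, hconj_a p]
    have haa : a p * a p = a p := by simp only [ha]; split_ifs <;> simp
    rw [haa]
    push_cast
    ring
  -- closed form for the integral of each factor
  have hFval : ∀ σ τ p, ∫ ω, F σ τ p ω ∂μ =
      (if p.1 = σ p.2 then
        (if p.1 = τ p.2 then a p + ((‖z‖ ^ 2 * s p.1 p.2 : ℝ) : ℂ) else a p)
       else (if p.1 = τ p.2 then a p else 1)) := by
    intro σ τ p
    simp only [hF, hg]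
    by_cases h1 : p.1 = σ p.2 <;> by_cases h2 : p.1 = τ p.2
    · simp only [if_pos h1, if_pos h2]
      exact hint_quad p
    · simp only [if_pos h1, if_neg h2, mul_one]
      exact hint_lin p
    · simp only [if_neg h1, if_pos h2, one_mul]
      exact hint_linc p
    · simp only [if_neg h1, if_neg h2, one_mul]
      simp
  -- product over entries
  have hprodint : ∀ σ τ, Integrable (fun ω => ∏ p : Fin n × Fin n, F σ τ p ω) μ :=
    fun σ τ => (indep_integral_prod (hFindep σ τ) (hFmeas σ τ) (hFint σ τ) Finset.univ).1
  have hprod : ∀ σ τ, ∫ ω, ∏ p : Fin n × Fin n, F σ τ p ω ∂μ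
      = ∏ p : Fin n × Fin n, ∫ ω, F σ τ p ω ∂μ :=
    fun σ τ => (indep_integral_prod (hFindep σ τ) (hFmeas σ τ) (hFint σ τ) Finset.univ).2
  -- regrouping a product over the diagonal of a permutation
  have e2 : ∀ (σ' : Equiv.Perm (Fin n)) (φ : Fin n × Fin n → ℂ),
      (∏ p : Fin n × Fin n, if p.1 = σ' p.2 then φ p else 1) = ∏ c, φ (σ' c, c) := by
    intro σ' φ
    rw [Fintype.prod_prod_type, Finset.prod_comm]
    refine Finset.prod_congr rfl fun c _ => ?_
    rw [Finset.prod_ite_eq' Finset.univ (σ' c) (fun r => φ (r, c))]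
    simp
  -- sign notation
  set ε : Equiv.Perm (Fin n) → ℂ := fun σ => ((Equiv.Perm.sign σ : ℤ) : ℂ) with hε
  have hsign : ∀ σ, ε σ * ε σ = 1 := by
    intro σ
    simp only [hε, ← Int.cast_mul, ← Units.val_mul, Int.units_mul_self, Units.val_one,
      Int.cast_one]
  have hconjε : ∀ σ, (starRingEnd ℂ) (ε σ) = ε σ := fun σ => by
    simp only [hε, map_intCast]
  -- pointwise expansion of |det|²
  have hdet : ∀ ω, (D ω).det * (starRingEnd ℂ) ((D ω).det)
      = ∑ σ : Equiv.Perm (Fin n), ∑ τ : Equiv.Perm (Fin n),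
          (ε σ * ε τ) * ∏ p : Fin n × Fin n, F σ τ p ω := by
    intro ω
    have hregroup : ∀ σ τ : Equiv.Perm (Fin n),
        (∏ i, D ω (σ i) i) * ∏ i, (starRingEnd ℂ) (D ω (τ i) i)
          = ∏ p : Fin n × Fin n, F σ τ p ω := by
      intro σ τ
      have e1 : ∏ p : Fin n × Fin n, F σ τ p ω
          = (∏ p : Fin n × Fin n, if p.1 = σ p.2 then a p - z * Y p ω else 1)
            * ∏ p : Fin n × Fin n,
                if p.1 = τ p.2 then (starRingEnd ℂ) (a p - z * Y p ω) else 1 := by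
        rw [← Finset.prod_mul_distrib]
      rw [e1, e2 σ (fun p => a p - z * Y p ω),
        e2 τ (fun p => (starRingEnd ℂ) (a p - z * Y p ω))]
      rfl
    rw [Matrix.det_apply', map_sum, Finset.sum_mul_sum]
    refine Finset.sum_congr rfl fun σ _ => Finset.sum_congr rfl fun τ _ => ?_
    rw [_root_.map_mul, map_prod, hconjε τ, ← hregroup σ τ]
    ring
  -- swap integral and sums
  have hswap : ∫ ω, (D ω).det * (starRingEnd ℂ) ((D ω).det) ∂μ
      = ∑ σ : Equiv.Perm (Fin n), ∑ τ : Equiv.Perm (Fin n),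
          (ε σ * ε τ) * ∏ p : Fin n × Fin n, ∫ ω, F σ τ p ω ∂μ := by
    rw [integral_congr_ae (Filter.Eventually.of_forall hdet),
      integral_finset_sum _ (fun σ _ =>
        integrable_finset_sum _ (fun τ _ => (hprodint σ τ).const_mul _))]
    refine Finset.sum_congr rfl fun σ _ => ?_
    rw [integral_finset_sum _ (fun τ _ => (hprodint σ τ).const_mul _)]
    refine Finset.sum_congr rfl fun τ _ => ?_
    rw [integral_const_mul, hprod σ τ]
  -- diagonal terms
  have hBentry : ∀ p : Fin n × Fin n,
      a p + ((‖z‖ ^ 2 * s p.1 p.2 : ℝ) : ℂ) = ((Bm p.1 p.2 : ℝ) : ℂ) := by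
    intro p
    simp only [hBm, ha, Matrix.add_apply, Matrix.one_apply, Matrix.smul_apply, smul_eq_mul]
    push_cast [apply_ite (fun x : ℝ => (x : ℂ))]
    ring
  have hdiag : ∀ σ : Equiv.Perm (Fin n),
      (∏ p : Fin n × Fin n, ∫ ω, F σ σ p ω ∂μ) = ((∏ c, Bm (σ c) c : ℝ) : ℂ) := by
    intro σ
    have h1 : (∏ p : Fin n × Fin n, ∫ ω, F σ σ p ω ∂μ)
        = ∏ p : Fin n × Fin n, (if p.1 = σ p.2 then ((Bm p.1 p.2 : ℝ) : ℂ) else 1) := by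
      refine Finset.prod_congr rfl fun p _ => ?_
      rw [hFval σ σ p]
      by_cases h : p.1 = σ p.2
      · simp only [if_pos h]
        exact hBentry p
      · simp only [if_neg h]
    rw [h1, e2 σ (fun p => ((Bm p.1 p.2 : ℝ) : ℂ))]
    push_cast
    rfl
  -- off-diagonal terms vanish
  have hoffdiag : ∀ σ τ : Equiv.Perm (Fin n), τ ≠ σ →
      (∏ p : Fin n × Fin n, ∫ ω, F σ τ p ω ∂μ) = 0 := by
    intro σ τ hne
    obtain ⟨i, hi⟩ : ∃ i, σ i ≠ τ i := by
      by_contra h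
      push_neg at h
      exact hne (Equiv.ext fun i => (h i).symm)
    by_cases hσ : σ i = i
    · refine Finset.prod_eq_zero (Finset.mem_univ (τ i, i)) ?_
      rw [hFval]
      have h1 : ¬ ((τ i, i).1 = σ (τ i, i).2) := by
        simp only
        rw [hσ]
        intro h
        exact hi (hσ.trans h.symm)
      have h2 : (τ i, i).1 = τ (τ i, i).2 := rfl
      rw [if_neg h1, if_pos h2]
      simp only [ha]
      rw [if_neg]
      intro h
      exact hi (hσ.trans h.symm)
    · refine Finset.prod_eq_zero (Finset.mem_univ (σ i, i)) ?_
      rw [hFval]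
      have h1 : (σ i, i).1 = σ (σ i, i).2 := rfl
      rw [if_pos h1]
      by_cases h2 : (σ i, i).1 = τ (σ i, i).2
      · exact absurd (h2 : σ i = τ i) hi
      · rw [if_neg h2]
        simp only [ha]
        rw [if_neg hσ]
  -- the permanent identity
  have hperm : ∑ σ : Equiv.Perm (Fin n), ∏ c, Bm (σ c) c = Bm.perm := by
    have h1 : ∀ σ : Equiv.Perm (Fin n), ∏ c, Bm (σ c) c = ∏ i, Bm i (σ⁻¹ i) := by
      intro σ
      rw [← Equiv.prod_comp σ⁻¹ (fun c => Bm (σ c) c)]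
      refine Finset.prod_congr rfl fun i _ => ?_
      rw [← Equiv.Perm.mul_apply, mul_inv_cancel, Equiv.Perm.one_apply]
    simp_rw [h1]
    rw [Matrix.perm]
    exact Equiv.sum_comp (Equiv.inv (Equiv.Perm (Fin n))) (fun σ => ∏ i, Bm i (σ i))
  -- the key complex identity
  have key : ∫ ω, (D ω).det * (starRingEnd ℂ) ((D ω).det) ∂μ = ((Bm.perm : ℝ) : ℂ) := by
    rw [hswap]
    have h1 : ∀ σ : Equiv.Perm (Fin n),
        (∑ τ : Equiv.Perm (Fin n), (ε σ * ε τ) * ∏ p : Fin n × Fin n, ∫ ω, F σ τ p ω ∂μ)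
          = ((∏ c, Bm (σ c) c : ℝ) : ℂ) := by
      intro σ
      rw [Finset.sum_eq_single σ
        (fun τ _ hτ => by rw [hoffdiag σ τ hτ, mul_zero])
        (fun h => absurd (Finset.mem_univ σ) h)]
      rw [hdiag σ, hsign σ, one_mul]
    simp_rw [h1]
    push_cast [← hperm]
    rfl
  -- conclude
  have h1 : ∫ ω, (D ω).det * (starRingEnd ℂ) ((D ω).det) ∂μ
      = ((∫ ω, ‖(D ω).det‖ ^ 2 ∂μ : ℝ) : ℂ) := by
    rw [integral_congr_ae (Filter.Eventually.of_forall fun ω => hnormsq ((D ω).det))]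
    exact integral_ofReal
  have h2 := h1.symm.trans key
  exact_mod_cast h2
end

section
/- Let K_n ≥ log n and let S^{(n)} be the n×n random matrix with independent entries S_{ij} = B_{ij}/K_n where B_{ij} is Bernoulli with success probability K_n·𝐒(i/n,j/n)/n for a continuous 𝐒 : [0,1]² → [0,1]. Then there is a constant C > 0 such that, almost surely, limsup_n of the maximum row sum of S^{(n)} is at most C. -/
open MeasureTheory ProbabilityTheory Filter

/-- Sparse Erdős–Rényi sampling of a continuous variance profile:
if `K n ≥ log n` and `S^(n)_{ij} = B^(n)_{ij} / K n` with independent Bernoulli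
entries `B^(n)_{ij}` of parameter `K n · bS(i/n, j/n) / n` for a continuous
`bS : [0,1]² → [0,1]`, then there is a constant `C > 0` such that almost surely
`limsup_n max_i ∑_j S^(n)_{ij} ≤ C`. -/
theorem limsup_max_row_sum_le_of_bernoulli_profile
    {Ω : Type*} [MeasurableSpace Ω] (μ : Measure Ω) [IsProbabilityMeasure μ]
    (bS : ℝ → ℝ → ℝ)
    (hcont : ContinuousOn (Function.uncurry bS) (Set.Icc 0 1 ×ˢ Set.Icc 0 1))
    (hrange : ∀ x y, bS x y ∈ Set.Icc (0 : ℝ) 1)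
    (K : ℕ → ℝ) (hKpos : ∀ n, 0 < K n)
    (hKlog : ∀ n : ℕ, Real.log n ≤ K n)
    (hKle : ∀ n : ℕ, 0 < n → K n ≤ n)
    (B : (n : ℕ) → Ω → Fin n → Fin n → ℝ)
    (hmeas : ∀ n (i j : Fin n), Measurable fun ω => B n ω i j)
    (h01 : ∀ n (i j : Fin n) ω, B n ω i j = 0 ∨ B n ω i j = 1)
    (hprob : ∀ (n : ℕ) (i j : Fin n),
      μ {ω | B n ω i j = 1} =
        ENNReal.ofReal (K n * bS (((i : ℝ) + 1) / n) (((j : ℝ) + 1) / n) / n))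
    (hindep : ∀ n : ℕ, iIndepFun
      (fun p : Fin n × Fin n => fun ω => B n ω p.1 p.2) μ) :
    ∃ C : ℝ, 0 < C ∧
      ∀ᵐ ω ∂μ,
        limsup (fun n : ℕ => ⨆ i : Fin n, ∑ j : Fin n, B n ω i j / K n) atTop ≤ C := by
  classical
  refine ⟨Real.exp 2, Real.exp_pos 2, ?_⟩
  set s : ℕ → Set Ω := fun n => {ω | ∃ i : Fin n, Real.exp 2 * K n ≤ ∑ j, B n ω i j} with hs
  -- basic facts about entries
  have hBle : ∀ n (i j : Fin n) ω, B n ω i j ≤ 1 := by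
    intro n i j ω; rcases h01 n i j ω with h | h <;> simp [h]
  have hBnn : ∀ n (i j : Fin n) ω, 0 ≤ B n ω i j := by
    intro n i j ω; rcases h01 n i j ω with h | h <;> simp [h]
  have he2 : (3 : ℝ) ≤ Real.exp 2 := by
    have := Real.add_one_le_exp (2 : ℝ); linarith
  -- per-row Chernoff bound
  have hrow : ∀ n : ℕ, 0 < n → ∀ i : Fin n,
      μ {ω | Real.exp 2 * K n ≤ ∑ j, B n ω i j} ≤ ENNReal.ofReal (Real.exp (-3 * K n)) := by
    intro n hn i
    have hnR : (0 : ℝ) < n := by exact_mod_cast hn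
    set X : Ω → ℝ := fun ω => ∑ j, B n ω i j with hX
    have hXmeas : Measurable X := Finset.measurable_sum _ fun j _ => hmeas n i j
    have hXnn : ∀ ω, 0 ≤ X ω := fun ω => Finset.sum_nonneg fun j _ => hBnn n i j ω
    have hXle : ∀ ω, X ω ≤ n := by
      intro ω
      calc X ω ≤ ∑ _j : Fin n, (1 : ℝ) := Finset.sum_le_sum fun j _ => hBle n i j ω
      _ = n := by simp
    have hint : Integrable (fun ω => Real.exp (2 * X ω)) μ := by
      refine ⟨((hXmeas.const_mul 2).exp).aestronglyMeasurable,
        HasFiniteIntegral.of_bounded (C := Real.exp (2 * n)) (ae_of_all _ fun ω => ?_)⟩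
      rw [Real.norm_eq_abs, abs_of_pos (Real.exp_pos _)]
      exact Real.exp_le_exp.2 (by linarith [hXle ω])
    -- mgf of a single entry
    have hmgf_entry : ∀ j : Fin n,
        mgf (fun ω => B n ω i j) μ 2 ≤ Real.exp ((Real.exp 2 - 1) * (K n / n)) := by
      intro j
      have hA : MeasurableSet {ω | B n ω i j = 1} :=
        hmeas n i j (measurableSet_singleton (1 : ℝ))
      have hBind : (fun ω => B n ω i j) =
          Set.indicator {ω | B n ω i j = 1} (fun _ => (1 : ℝ)) := by
        funext ω
        rcases h01 n i j ω with h | h <;>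
          simp [Set.indicator_apply, Set.mem_setOf_eq, h]
      have hq : 0 ≤ K n * bS (((i : ℝ) + 1) / n) (((j : ℝ) + 1) / n) / n :=
        div_nonneg (mul_nonneg (hKpos n).le (hrange _ _).1) hnR.le
      have hqle : K n * bS (((i : ℝ) + 1) / n) (((j : ℝ) + 1) / n) / n ≤ K n / n := by
        gcongr
        exact mul_le_of_le_one_right (hKpos n).le (hrange _ _).2
      have hIntB : Integrable (fun ω => B n ω i j) μ := by
        refine ⟨(hmeas n i j).aestronglyMeasurable,
          HasFiniteIntegral.of_bounded (C := 1) (ae_of_all _ fun ω => ?_)⟩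
        rw [Real.norm_eq_abs, abs_of_nonneg (hBnn n i j ω)]
        exact hBle n i j ω
      have hEB : ∫ ω, B n ω i j ∂μ
          = K n * bS (((i : ℝ) + 1) / n) (((j : ℝ) + 1) / n) / n := by
        calc ∫ ω, B n ω i j ∂μ
            = ∫ ω, Set.indicator {ω | B n ω i j = 1} (fun _ => (1 : ℝ)) ω ∂μ := by
              exact congrArg (fun g : Ω → ℝ => ∫ ω, g ω ∂μ) hBind
          _ = (μ {ω | B n ω i j = 1}).toReal • (1 : ℝ) := integral_indicator_const _ hA
          _ = K n * bS (((i : ℝ) + 1) / n) (((j : ℝ) + 1) / n) / n := by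
              rw [smul_eq_mul, mul_one, hprob n i j, ENNReal.toReal_ofReal hq]
      have hmgf_eq : mgf (fun ω => B n ω i j) μ 2
          = 1 + (Real.exp 2 - 1) * (∫ ω, B n ω i j ∂μ) := by
        have hptw : ∀ ω, Real.exp (2 * B n ω i j)
            = 1 + (Real.exp 2 - 1) * B n ω i j := by
          intro ω
          rcases h01 n i j ω with h | h <;> simp [h] <;> ring
        rw [mgf]
        simp only [hptw]
        rw [integral_add (integrable_const 1) (hIntB.const_mul _), integral_const,
          integral_const_mul, probReal_univ, smul_eq_mul, mul_one]
      have h1 : mgf (fun ω => B n ω i j) μ 2 ≤ 1 + (Real.exp 2 - 1) * (K n / n) := by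
        rw [hmgf_eq, hEB]
        have he1 : (0 : ℝ) ≤ Real.exp 2 - 1 := by linarith
        nlinarith [hqle]
      refine h1.trans ?_
      linarith [Real.add_one_le_exp ((Real.exp 2 - 1) * (K n / n))]
    -- mgf of the row sum
    have hsum_eq : X = ∑ p ∈ ({i} ×ˢ (Finset.univ : Finset (Fin n))),
        (fun ω => B n ω p.1 p.2) := by
      funext ω
      rw [Finset.sum_apply]
      rw [Finset.sum_product, Finset.sum_singleton]
    have hmgfX : mgf X μ 2 = ∏ p ∈ ({i} ×ˢ (Finset.univ : Finset (Fin n))),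
        mgf (fun ω => B n ω p.1 p.2) μ 2 := by
      rw [hsum_eq]
      exact (hindep n).mgf_sum (fun p => hmeas n p.1 p.2) _
    have hprod : mgf X μ 2 ≤ Real.exp ((Real.exp 2 - 1) * K n) := by
      rw [hmgfX]
      calc ∏ p ∈ ({i} ×ˢ (Finset.univ : Finset (Fin n))),
            mgf (fun ω => B n ω p.1 p.2) μ 2
          ≤ ∏ _p ∈ ({i} ×ˢ (Finset.univ : Finset (Fin n))),
            Real.exp ((Real.exp 2 - 1) * (K n / n)) :=
            Finset.prod_le_prod (fun p _ => mgf_nonneg) (fun p hp => by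
              have h1 : p.1 = i := Finset.mem_singleton.1 (Finset.mem_product.1 hp).1
              rw [h1]; exact hmgf_entry p.2)
        _ = Real.exp ((Real.exp 2 - 1) * (K n / n)) ^ n := by
            rw [Finset.prod_const]
            congr 1
            simp
        _ = Real.exp (n * ((Real.exp 2 - 1) * (K n / n))) := (Real.exp_nat_mul _ n).symm
        _ = Real.exp ((Real.exp 2 - 1) * K n) := by
            congr 1
            field_simp
    -- Chernoff
    have hcher := measure_ge_le_exp_mul_mgf (μ := μ) (X := X) (t := 2)
      (Real.exp 2 * K n) (by norm_num) hint
    have htr : (μ {ω | Real.exp 2 * K n ≤ X ω}).toReal ≤ Real.exp (-3 * K n) := by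
      refine hcher.trans ?_
      calc Real.exp (-2 * (Real.exp 2 * K n)) * mgf X μ 2
          ≤ Real.exp (-2 * (Real.exp 2 * K n)) * Real.exp ((Real.exp 2 - 1) * K n) :=
            mul_le_mul_of_nonneg_left hprod (Real.exp_pos _).le
        _ = Real.exp (-2 * (Real.exp 2 * K n) + (Real.exp 2 - 1) * K n) :=
            (Real.exp_add _ _).symm
        _ ≤ Real.exp (-3 * K n) := by
            apply Real.exp_le_exp.2
            nlinarith [mul_nonneg (by linarith : (0:ℝ) ≤ Real.exp 2 - 2) (hKpos n).le]
    calc μ {ω | Real.exp 2 * K n ≤ X ω}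
        = ENNReal.ofReal ((μ {ω | Real.exp 2 * K n ≤ X ω}).toReal) :=
          (ENNReal.ofReal_toReal (measure_ne_top μ _)).symm
      _ ≤ ENNReal.ofReal (Real.exp (-3 * K n)) := ENNReal.ofReal_le_ofReal htr
  -- union bound over rows
  have hsn : ∀ n : ℕ, μ (s n) ≤ ENNReal.ofReal (n * Real.exp (-3 * K n)) := by
    intro n
    rcases Nat.eq_zero_or_pos n with rfl | hn
    · have hempty : s 0 = ∅ := by
        ext ω; simp [hs]
      simp [hempty]
    · have hcover : s n ⊆ ⋃ i : Fin n, {ω | Real.exp 2 * K n ≤ ∑ j, B n ω i j} := by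
        rintro ω ⟨i, hi⟩; exact Set.mem_iUnion.2 ⟨i, hi⟩
      calc μ (s n) ≤ ∑ i : Fin n, μ {ω | Real.exp 2 * K n ≤ ∑ j, B n ω i j} :=
            le_trans (measure_mono hcover) (measure_iUnion_fintype_le μ _)
        _ ≤ ∑ i : Fin n, ENNReal.ofReal (Real.exp (-3 * K n)) :=
            Finset.sum_le_sum fun i _ => hrow n hn i
        _ = (n : ENNReal) * ENNReal.ofReal (Real.exp (-3 * K n)) := by
            rw [Finset.sum_const, Finset.card_univ, Fintype.card_fin, nsmul_eq_mul]
        _ = ENNReal.ofReal (n * Real.exp (-3 * K n)) := by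
            rw [ENNReal.ofReal_mul (Nat.cast_nonneg n), ENNReal.ofReal_natCast]
  -- summability
  have hann : ∀ n : ℕ, 0 ≤ (n : ℝ) * Real.exp (-3 * K n) :=
    fun n => mul_nonneg (Nat.cast_nonneg n) (Real.exp_pos _).le
  have hsum : Summable (fun n : ℕ => (n : ℝ) * Real.exp (-3 * K n)) := by
    refine Summable.of_nonneg_of_le hann (fun n => ?_)
      ((Real.summable_one_div_nat_pow (p := 2)).mpr (by norm_num))
    rcases Nat.eq_zero_or_pos n with rfl | hn
    · simp
    · have hnR : (0 : ℝ) < n := by exact_mod_cast hn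
      have hlog : Real.exp (-3 * K n) ≤ ((n : ℝ) ^ 3)⁻¹ := by
        have h3 : (n : ℝ) ^ 3 ≤ Real.exp (3 * K n) := by
          calc (n : ℝ) ^ 3 = Real.exp (Real.log n) ^ 3 := by rw [Real.exp_log hnR]
            _ ≤ Real.exp (K n) ^ 3 :=
              pow_le_pow_left₀ (Real.exp_pos _).le (Real.exp_le_exp.2 (hKlog n)) 3
            _ = Real.exp ((3 : ℕ) * K n) := (Real.exp_nat_mul _ 3).symm
            _ = Real.exp (3 * K n) := by norm_num
        rw [show (-3 : ℝ) * K n = -(3 * K n) by ring, Real.exp_neg]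
        exact inv_anti₀ (by positivity) h3
      calc (n : ℝ) * Real.exp (-3 * K n) ≤ n * ((n : ℝ) ^ 3)⁻¹ :=
            mul_le_mul_of_nonneg_left hlog (Nat.cast_nonneg n)
        _ = 1 / (n : ℝ) ^ 2 := by field_simp
  have hne : (∑' n, μ (s n)) ≠ ⊤ := by
    refine ne_top_of_le_ne_top ?_ (ENNReal.tsum_le_tsum hsn)
    rw [← ENNReal.ofReal_tsum_of_nonneg hann hsum]
    exact ENNReal.ofReal_ne_top
  -- Borel–Cantelli and conclusion
  filter_upwards [ae_eventually_notMem hne] with ω hω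
  have hev : ∀ᶠ n in atTop,
      (⨆ i : Fin n, ∑ j, B n ω i j / K n) ≤ Real.exp 2 := by
    filter_upwards [hω] with n hn
    refine Real.iSup_le (fun i => ?_) (Real.exp_pos 2).le
    have hni : ∑ j, B n ω i j < Real.exp 2 * K n :=
      lt_of_not_ge fun h => hn ⟨i, h⟩
    rw [← Finset.sum_div, div_le_iff₀ (hKpos n)]
    linarith
  refine limsup_le_of_le ?_ hev
  exact isCoboundedUnder_le_of_le atTop (x := 0) fun n =>
    Real.iSup_nonneg fun i => Finset.sum_nonneg fun j _ =>
      div_nonneg (hBnn n i j ω) (hKpos n).le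
end
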